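/- Let U, 𝒴, and 𝒬 be standard Borel spaces, μ a Borel probability measure on U, Y : U → 𝒴 and Q : U → 𝒬 Borel measurable, L : 𝒬 × 𝒬 → [0, ∞] a Borel measurable loss function, and y ↦ μ^y a disintegration of μ with respect to Y. Then for every Borel measurable B : 𝒴 → 𝒬 the average error decomposes as ∫_U L(Q(u), B(Y(u))) dμ(u) = ∫_𝒴 ∫_U L(Q(u), B(y)) dμ^y(u) d(Y_♯μ)(y). Consequently, if B* : 𝒴 → 𝒬 is Borel measurable and for Y_♯μ-almost every y the point B*(y) minimises b ↦ ∫_U L(Q(u), b) dμ^y(u) over 𝒬, then B* minimises the average error ∫_U L(Q(u), B(Y(u))) dμ(u) over all Borel measurable B : 𝒴 → 𝒬; i.e. average-case optimal numerical methods coincide with (non-randomised) Bayes rules when the measure defining the average error is the Bayesian prior. -/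

import Mathlib

open MeasureTheory ProbabilityTheory

/-- Average-case optimal numerical methods are Bayes rules: given a disintegration
`y ↦ μ^y` of the prior `μ` with respect to the information operator `Y`, the
average error of any method `B` decomposes as an iterated integral of the
posterior expected loss, and consequently any measurable `B*` whose value `B*(y)`
minimises the posterior expected loss for almost every `y` minimises the average
error among all Borel measurable methods. -/
theorem average_case_optimal_iff_bayes_rule
    {U 𝒴 𝒬 : Type*} [MeasurableSpace U] [StandardBorelSpace U]
    [MeasurableSpace 𝒴] [StandardBorelSpace 𝒴]
    [MeasurableSpace 𝒬] [StandardBorelSpace 𝒬]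
    (μ : Measure U) [IsProbabilityMeasure μ]
    (Y : U → 𝒴) (hY : Measurable Y)
    (Q : U → 𝒬) (hQ : Measurable Q)
    (L : 𝒬 → 𝒬 → ENNReal) (hL : Measurable (Function.uncurry L))
    (κ : ProbabilityTheory.Kernel 𝒴 U) [IsMarkovKernel κ]
    (hκ_fib : ∀ᵐ y ∂(μ.map Y), κ y {u | Y u ≠ y} = 0)
    (hκ_rec : ∀ E : Set U, MeasurableSet E → μ E = ∫⁻ y, κ y E ∂(μ.map Y)) :
    (∀ B : 𝒴 → 𝒬, Measurable B →
      ∫⁻ u, L (Q u) (B (Y u)) ∂μ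
        = ∫⁻ y, ∫⁻ u, L (Q u) (B y) ∂(κ y) ∂(μ.map Y)) ∧
    (∀ Bstar : 𝒴 → 𝒬, Measurable Bstar →
      (∀ᵐ y ∂(μ.map Y), ∀ b : 𝒬,
        ∫⁻ u, L (Q u) (Bstar y) ∂(κ y) ≤ ∫⁻ u, L (Q u) b ∂(κ y)) →
      ∀ B : 𝒴 → 𝒬, Measurable B →
        ∫⁻ u, L (Q u) (Bstar (Y u)) ∂μ ≤ ∫⁻ u, L (Q u) (B (Y u)) ∂μ) := by
  -- μ is the bind of its pushforward with κ
  have hbind : μ = (μ.map Y).bind (fun y => κ y) := by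
    ext E hE
    rw [Measure.bind_apply hE κ.measurable.aemeasurable, hκ_rec E hE]
  -- decomposition of the integral of any measurable f
  have hdec : ∀ f : U → ENNReal, Measurable f →
      ∫⁻ u, f u ∂μ = ∫⁻ y, ∫⁻ u, f u ∂(κ y) ∂(μ.map Y) := by
    intro f hf
    conv_lhs => rw [hbind]
    exact Measure.lintegral_bind κ.measurable.aemeasurable hf.aemeasurable
  have main : ∀ B : 𝒴 → 𝒬, Measurable B →
      ∫⁻ u, L (Q u) (B (Y u)) ∂μ
        = ∫⁻ y, ∫⁻ u, L (Q u) (B y) ∂(κ y) ∂(μ.map Y) := by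
    intro B hB
    have hf : Measurable fun u => L (Q u) (B (Y u)) :=
      hL.comp (hQ.prodMk (hB.comp hY))
    rw [hdec _ hf]
    refine lintegral_congr_ae ?_
    filter_upwards [hκ_fib] with y hy
    refine lintegral_congr_ae ?_
    have : ∀ᵐ u ∂(κ y), Y u = y := by
      rw [ae_iff]
      simpa using hy
    filter_upwards [this] with u hu
    rw [hu]
  refine ⟨main, ?_⟩
  intro Bstar hBstar hopt B hB
  rw [main Bstar hBstar, main B hB]
  refine lintegral_mono_ae ?_
  filter_upwards [hopt] with y hy
  exact hy (B y)
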